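/- For every positive integer k, with q_k(x,y) := sin(kx)(cos y − cos 2y) and v_k(x,y) := sin(kx)( (k²+1)⁻¹ cos y − 4(k²+4)⁻¹ cos 2y ), one has ∫_{(0,π)×(0,π)} (∂q_k/∂y)(x,y) · (∂v_k/∂y)(x,y) dx dy = ∫_{(0,π)×(0,π)} |∇v_k(x,y)|² dx dy (both equal (π²/4)(1/(k²+1) + 16/(k²+4))). -/

import Mathlib

open scoped Real

/-- `q_k(x,y) = sin(kx)(cos y − cos 2y)`. -/
noncomputable def qfun (k : ℕ) (x y : ℝ) : ℝ :=
  Real.sin ((k : ℝ) * x) * (Real.cos y - Real.cos (2 * y))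

/-- `v_k(x,y) = sin(kx)((k²+1)⁻¹ cos y − 4(k²+4)⁻¹ cos 2y)`. -/
noncomputable def vfun (k : ℕ) (x y : ℝ) : ℝ :=
  Real.sin ((k : ℝ) * x) *
    (((k : ℝ) ^ 2 + 1)⁻¹ * Real.cos y - 4 * ((k : ℝ) ^ 2 + 4)⁻¹ * Real.cos (2 * y))

section helpers


lemma hdsin (c y : ℝ) : HasDerivAt (fun y => Real.sin (c*y)) (c * Real.cos (c*y)) y := by
  exact ((Real.hasDerivAt_sin (c*y)).comp y ((hasDerivAt_id y).const_mul c)).congr_deriv (by ring)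

lemma hdcos (c y : ℝ) : HasDerivAt (fun y => Real.cos (c*y)) (-(c * Real.sin (c*y))) y := by
  exact ((Real.hasDerivAt_cos (c*y)).comp y ((hasDerivAt_id y).const_mul c)).congr_deriv (by ring)

-- antiderivative of sin(cy)^2
lemma hA (c : ℝ) (hc : c ≠ 0) (y : ℝ) :
    HasDerivAt (fun y => y/2 - Real.sin (c*y)*Real.cos (c*y)/(2*c)) (Real.sin (c*y)^2) y := by
  have h := ((hasDerivAt_id y).div_const 2).sub (((hdsin c y).mul (hdcos c y)).div_const (2*c))
  refine h.congr_deriv (Eq.symm ?_)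
  have p := Real.sin_sq_add_cos_sq (c*y)
  field_simp
  linear_combination p

-- antiderivative of cos(cy)^2
lemma hD (c : ℝ) (hc : c ≠ 0) (y : ℝ) :
    HasDerivAt (fun y => y/2 + Real.sin (c*y)*Real.cos (c*y)/(2*c)) (Real.cos (c*y)^2) y := by
  have h := ((hasDerivAt_id y).div_const 2).add (((hdsin c y).mul (hdcos c y)).div_const (2*c))
  refine h.congr_deriv (Eq.symm ?_)
  have p := Real.sin_sq_add_cos_sq (c*y)
  field_simp
  linear_combination p

-- antiderivative of sin y * sin 2y
lemma hC (y : ℝ) : HasDerivAt (fun y => (2/3)*Real.sin y^3) (Real.sin y * Real.sin (2*y)) y := by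
  have h := (((Real.hasDerivAt_sin y).pow 3)).const_mul (2/3 : ℝ)
  refine h.congr_deriv (Eq.symm ?_)
  rw [Real.sin_two_mul]
  ring

-- antiderivative of cos y * cos 2y
lemma hF (y : ℝ) : HasDerivAt (fun y => Real.sin y - (2/3)*Real.sin y^3) (Real.cos y * Real.cos (2*y)) y := by
  have h := (Real.hasDerivAt_sin y).sub (((Real.hasDerivAt_sin y).pow 3).const_mul (2/3 : ℝ))
  refine h.congr_deriv (Eq.symm ?_)
  have p := Real.sin_sq_add_cos_sq y
  rw [Real.cos_two_mul]
  linear_combination (2 * Real.cos y) * p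

lemma hA1 (y : ℝ) : HasDerivAt (fun y => y/2 - Real.sin y*Real.cos y/2) (Real.sin y^2) y := by
  simpa using hA 1 one_ne_zero y

lemma hD1 (y : ℝ) : HasDerivAt (fun y => y/2 + Real.sin y*Real.cos y/2) (Real.cos y^2) y := by
  simpa using hD 1 one_ne_zero y

lemma innerL (S a b : ℝ) :
    (∫ y in (0:ℝ)..π, (S*(2*Real.sin (2*y) - Real.sin y)) * (S*(8*b*Real.sin (2*y) - a*Real.sin y)))
      = S^2*((a+16*b)*(π/2)) := by
  have key : ∀ y ∈ Set.uIcc (0:ℝ) π,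
      HasDerivAt (fun y => S^2*(a*(y/2 - Real.sin y*Real.cos y/2)
        - (2*a+8*b)*((2/3)*Real.sin y^3) + 16*b*(y/2 - Real.sin (2*y)*Real.cos (2*y)/(2*2))))
      ((S*(2*Real.sin (2*y) - Real.sin y)) * (S*(8*b*Real.sin (2*y) - a*Real.sin y))) y := by
    intro y _
    have h := ((((hA1 y).const_mul a).sub ((hC y).const_mul (2*a+8*b))).add
      ((hA 2 two_ne_zero y).const_mul (16*b))).const_mul (S^2)
    refine h.congr_deriv (Eq.symm ?_)
    ring
  rw [intervalIntegral.integral_eq_sub_of_hasDerivAt key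
    ((Continuous.intervalIntegrable (by fun_prop) _ _))]
  simp only [mul_zero, Real.sin_zero, Real.sin_pi, Real.sin_two_pi, zero_mul]
  ring

lemma innerR (K S a b : ℝ) :
    (∫ y in (0:ℝ)..π, ((K*(a*Real.cos y - 4*b*Real.cos (2*y)))^2
        + (S*(8*b*Real.sin (2*y) - a*Real.sin y))^2))
      = K^2*((a^2+16*b^2)*(π/2)) + S^2*((a^2+64*b^2)*(π/2)) := by
  have key : ∀ y ∈ Set.uIcc (0:ℝ) π,
      HasDerivAt (fun y =>
        K^2*(a^2*(y/2 + Real.sin y*Real.cos y/2) - 8*a*b*(Real.sin y - (2/3)*Real.sin y^3)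
            + 16*b^2*(y/2 + Real.sin (2*y)*Real.cos (2*y)/(2*2)))
        + S^2*(a^2*(y/2 - Real.sin y*Real.cos y/2) - 16*a*b*((2/3)*Real.sin y^3)
            + 64*b^2*(y/2 - Real.sin (2*y)*Real.cos (2*y)/(2*2))))
      ((K*(a*Real.cos y - 4*b*Real.cos (2*y)))^2 + (S*(8*b*Real.sin (2*y) - a*Real.sin y))^2) y := by
    intro y _
    have hK := ((((hD1 y).const_mul (a^2)).sub ((hF y).const_mul (8*a*b))).add
      ((hD 2 two_ne_zero y).const_mul (16*b^2))).const_mul (K^2)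
    have hS := ((((hA1 y).const_mul (a^2)).sub ((hC y).const_mul (16*a*b))).add
      ((hA 2 two_ne_zero y).const_mul (64*b^2))).const_mul (S^2)
    refine (hK.add hS).congr_deriv (Eq.symm ?_)
    ring
  rw [intervalIntegral.integral_eq_sub_of_hasDerivAt key
    ((Continuous.intervalIntegrable (by fun_prop) _ _))]
  simp only [mul_zero, Real.sin_zero, Real.sin_pi, Real.sin_two_pi, zero_mul]
  ring

lemma outerL (k : ℕ) (hk : 1 ≤ k) (C : ℝ) :
    (∫ x in (0:ℝ)..π, Real.sin ((k:ℝ)*x)^2 * C) = π/2*C := by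
  have hk0 : ((k:ℝ)) ≠ 0 := Nat.cast_ne_zero.2 (by omega)
  have key : ∀ x ∈ Set.uIcc (0:ℝ) π,
      HasDerivAt (fun x => (x/2 - Real.sin ((k:ℝ)*x)*Real.cos ((k:ℝ)*x)/(2*(k:ℝ))) * C)
      (Real.sin ((k:ℝ)*x)^2 * C) x := fun x _ => (hA (k:ℝ) hk0 x).mul_const C
  rw [intervalIntegral.integral_eq_sub_of_hasDerivAt key
    ((Continuous.intervalIntegrable (by fun_prop) _ _))]
  simp only [mul_zero, Real.sin_zero, Real.sin_nat_mul_pi, zero_mul]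
  ring

lemma outerR (k : ℕ) (hk : 1 ≤ k) (C D : ℝ) :
    (∫ x in (0:ℝ)..π, ((k:ℝ)*Real.cos ((k:ℝ)*x))^2*C + Real.sin ((k:ℝ)*x)^2*D)
      = π/2*((k:ℝ)^2*C + D) := by
  have hk0 : ((k:ℝ)) ≠ 0 := Nat.cast_ne_zero.2 (by omega)
  have key : ∀ x ∈ Set.uIcc (0:ℝ) π,
      HasDerivAt (fun x => (x/2 + Real.sin ((k:ℝ)*x)*Real.cos ((k:ℝ)*x)/(2*(k:ℝ))) * ((k:ℝ)^2*C)
        + (x/2 - Real.sin ((k:ℝ)*x)*Real.cos ((k:ℝ)*x)/(2*(k:ℝ))) * D)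
      (((k:ℝ)*Real.cos ((k:ℝ)*x))^2*C + Real.sin ((k:ℝ)*x)^2*D) x := by
    intro x _
    have h := ((hD (k:ℝ) hk0 x).mul_const ((k:ℝ)^2*C)).add ((hA (k:ℝ) hk0 x).mul_const D)
    refine h.congr_deriv (Eq.symm ?_)
    ring
  rw [intervalIntegral.integral_eq_sub_of_hasDerivAt key
    ((Continuous.intervalIntegrable (by fun_prop) _ _))]
  simp only [mul_zero, Real.sin_zero, Real.sin_nat_mul_pi, zero_mul]
  ring


end helpers

/-- For every positive integer `k`:
`∫_Ω ∂_y q_k ∂_y v_k = ∫_Ω |∇v_k|²`, both being equal to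
`(π²/4)(1/(k²+1) + 16/(k²+4))`. -/
theorem stmt19 (k : ℕ) (hk : 1 ≤ k) :
    (∫ x in (0:ℝ)..π, ∫ y in (0:ℝ)..π,
        (deriv (fun y' => qfun k x y') y) * (deriv (fun y' => vfun k x y') y))
      = (∫ x in (0:ℝ)..π, ∫ y in (0:ℝ)..π,
          ((deriv (fun x' => vfun k x' y) x) ^ 2 + (deriv (fun y' => vfun k x y') y) ^ 2))
    ∧ (∫ x in (0:ℝ)..π, ∫ y in (0:ℝ)..π,
        (deriv (fun y' => qfun k x y') y) * (deriv (fun y' => vfun k x y') y))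
      = π ^ 2 / 4 * (1 / ((k : ℝ) ^ 2 + 1) + 16 / ((k : ℝ) ^ 2 + 4)) := by
  have dq : ∀ x y : ℝ, deriv (fun y' => qfun k x y') y
      = Real.sin ((k:ℝ)*x) * (2*Real.sin (2*y) - Real.sin y) := by
    intro x y
    have h : HasDerivAt (fun y' => qfun k x y')
        (Real.sin ((k:ℝ)*x) * (2*Real.sin (2*y) - Real.sin y)) y := by
      simp only [qfun]
      have h2 := ((Real.hasDerivAt_cos y).sub (hdcos 2 y)).const_mul (Real.sin ((k:ℝ)*x))
      refine h2.congr_deriv (Eq.symm ?_)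
      ring
    exact h.deriv
  have dv : ∀ x y : ℝ, deriv (fun y' => vfun k x y') y
      = Real.sin ((k:ℝ)*x) * (8*((k:ℝ)^2+4)⁻¹*Real.sin (2*y) - ((k:ℝ)^2+1)⁻¹*Real.sin y) := by
    intro x y
    have h : HasDerivAt (fun y' => vfun k x y')
        (Real.sin ((k:ℝ)*x) * (8*((k:ℝ)^2+4)⁻¹*Real.sin (2*y) - ((k:ℝ)^2+1)⁻¹*Real.sin y)) y := by
      simp only [vfun]
      have h2 := (((Real.hasDerivAt_cos y).const_mul (((k:ℝ)^2+1)⁻¹)).sub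
        ((hdcos 2 y).const_mul (4*((k:ℝ)^2+4)⁻¹))).const_mul (Real.sin ((k:ℝ)*x))
      refine h2.congr_deriv (Eq.symm ?_)
      ring
    exact h.deriv
  have dvx : ∀ x y : ℝ, deriv (fun x' => vfun k x' y) x
      = ((k:ℝ)*Real.cos ((k:ℝ)*x)) * (((k:ℝ)^2+1)⁻¹*Real.cos y - 4*((k:ℝ)^2+4)⁻¹*Real.cos (2*y)) := by
    intro x y
    have h : HasDerivAt (fun x' => vfun k x' y)
        (((k:ℝ)*Real.cos ((k:ℝ)*x)) * (((k:ℝ)^2+1)⁻¹*Real.cos y - 4*((k:ℝ)^2+4)⁻¹*Real.cos (2*y))) x := by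
      simp only [vfun]
      exact (hdsin (k:ℝ) x).mul_const _
    exact h.deriv
  simp only [dq, dv, dvx, innerL, innerR]
  rw [outerL k hk, outerR k hk]
  have h1 : ((k:ℝ)^2+1) ≠ 0 := by positivity
  have h2 : ((k:ℝ)^2+4) ≠ 0 := by positivity
  constructor
  · field_simp
    ring
  · field_simp
    ring
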